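/- Let (σ_k) be nonincreasing with σ_k > 0 and suppose the step sizes satisfy 8 t_k² L_k² ≤ 1 for all k ≥ 1. Then for the optimistic extragradient iterates, for every z ∈ Z and every k ≥ 2: ½‖z^{k+1} − z‖² + (t_k²/2)‖V_k(z^{k−1/2}) − V_k(z^{k+1/2})‖² ≤ ½‖z^k − z‖² + (t_{k−1}²/2)‖V_{k−1}(z^{k−3/2}) − V_{k−1}(z^{k−1/2})‖² − t_k(⟨V_k(z^{k+1/2}), z^{k+1/2} − z⟩ + G_k(z^{k+1/2}) − G_k(z)) − ¼‖z^{k+1/2} − z^k‖². -/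
import Mathlib


noncomputable section

open scoped RealInnerProductSpace
open Filter Topology

variable {Z : Type*} [NormedAddCommGroup Z] [InnerProductSpace ℝ Z] [CompleteSpace Z]

/-- Effective domain of an extended-real-valued function. -/
def edom {Z : Type*} (g : Z → EReal) : Set Z := {z | g z < ⊤}

/-- `g` is proper, convex and lower semicontinuous. -/
structure ProperConvexLsc (g : Z → EReal) : Prop where
  ne_bot : ∀ z, g z ≠ ⊥
  proper : ∃ z, g z < ⊤
  convex : ∀ x y : Z, ∀ a b : ℝ, 0 ≤ a → 0 ≤ b → a + b = 1 →
    g (a • x + b • y) ≤ (a : EReal) * g x + (b : EReal) * g y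
  lsc : LowerSemicontinuous g

/-- Monotonicity of an operator on a real Hilbert space. -/
def IsMonotoneOp (F : Z → Z) : Prop := ∀ x y : Z, 0 ≤ ⟪F x - F y, x - y⟫

/-- Lipschitz continuity with (real) constant `L`. -/
def IsLipOp (L : ℝ) (F : Z → Z) : Prop := ∀ x y : Z, ‖F x - F y‖ ≤ L * ‖x - y‖

/-- The bifunction `H^{(F,g)}(z,y) = ⟪F y, z - y⟫ + g z - g y`. -/
def Hb (F : Z → Z) (g : Z → EReal) (z y : Z) : EReal :=
  ((⟪F y, z - y⟫ : ℝ) : EReal) + g z - g y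

/-- The localized dual gap function `Θ(z | F,g,C)`. -/
def gapFn (F : Z → Z) (g : Z → EReal) (C : Set Z) (z : Z) : EReal :=
  ⨆ y ∈ C, Hb F g z y

/-- The convex subdifferential of an extended-real-valued function. -/
def subdiff (g : Z → EReal) (x : Z) : Set Z :=
  {ξ : Z | ∀ y : Z, ((⟪ξ, y - x⟫ : ℝ) : EReal) + g x ≤ g y}

/-- The solution set `zer(F + ∂g)`. -/
def zerFg (F : Z → Z) (g : Z → EReal) : Set Z := {z : Z | -F z ∈ subdiff g z}

/-- The normal cone to a set `C` at `z`. -/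
def normalCone (C : Set Z) (z : Z) : Set Z :=
  {ξ : Z | z ∈ C ∧ ∀ z' ∈ C, ⟪ξ, z' - z⟫ ≤ 0}

/-- The solution set `zer(F + ∂g + N_C)`. -/
def zerFgN (F : Z → Z) (g : Z → EReal) (C : Set Z) : Set Z :=
  {z : Z | ∃ ξ ∈ subdiff g z, ∃ p ∈ normalCone C z, F z + ξ + p = 0}

/-- The solution set `S₁` of problem (P): points of `S₂` solving the upper HVI over `S₂`. -/
def solP (F₁ : Z → Z) (g₁ : Z → EReal) (S₂ : Set Z) : Set Z :=
  {zs : Z | zs ∈ S₂ ∧ ∀ u ∈ S₂, 0 ≤ Hb F₁ g₁ u zs}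

/-- `(α,ρ)`-weak sharpness of the solution set `S` of `HVI(F,g)`. -/
def WeakSharp (F : Z → Z) (g : Z → EReal) (S : Set Z) (α ρ : ℝ) : Prop :=
  ∀ zs ∈ S, ∀ z ∈ edom g,
    (((α / ρ) * Metric.infDist z S ^ ρ : ℝ) : EReal) ≤ Hb F g z zs

/-- Support function of a set. -/
def suppFn (p : Z) (C : Set Z) : EReal := ⨆ z ∈ C, ((⟪p, z⟫ : ℝ) : EReal)

/-- The Fitzpatrick-type function `φ^{(F,g)}(z,u)`. -/
def phiFn (F : Z → Z) (g : Z → EReal) (z u : Z) : EReal :=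
  ⨆ y ∈ edom g, (Hb F g z y + ((⟪y, u⟫ : ℝ) : EReal))

/-- `x = prox_{τ G}(u)`, via the variational characterization
`⟪u - x, v - x⟫ ≤ τ (G v - G x)` for all `v`. -/
def IsProx (τ : ℝ) (G : Z → EReal) (u x : Z) : Prop :=
  ∀ v : Z, ((⟪u - x, v - x⟫ : ℝ) : EReal) ≤ (τ : EReal) * (G v - G x)

/-- The Tikhonov-regularized operator `V_k = F₂ + σ_k F₁`. -/
def Vop (F₁ F₂ : Z → Z) (σ : ℕ → ℝ) (k : ℕ) (x : Z) : Z := F₂ x + σ k • F₁ x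

/-- The Tikhonov-regularized function `G_k = g₂ + σ_k g₁`. -/
def Gfun (g₁ g₂ : Z → EReal) (σ : ℕ → ℝ) (k : ℕ) (v : Z) : EReal :=
  g₂ v + ((σ k : ℝ) : EReal) * g₁ v

/-- The Attouch–Czarnecki summability condition. -/
def ACcond (F₂ : Z → Z) (g₂ : Z → EReal) (S₂ : Set Z) (t σ : ℕ → ℝ) : Prop :=
  ∀ p : Z, (∃ zs : Z, p ∈ normalCone S₂ zs) →
    ∃ M : ℝ, ∀ K : ℕ,
      (∑ k ∈ Finset.Icc 1 K,
        ((t k : ℝ) : EReal) * ((⨆ zs ∈ S₂, phiFn F₂ g₂ zs (σ k • p)) - suppFn (σ k • p) S₂))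
        ≤ (M : EReal)

/-- `T_K = ∑_{k=1}^K t_k`. -/
def Tsum (t : ℕ → ℝ) (K : ℕ) : ℝ := ∑ k ∈ Finset.Icc 1 K, t k

/-- The ergodic average `z̄^K` (here `w k` plays the role of `z^{k+1/2}`). -/
def zbar (t : ℕ → ℝ) (w : ℕ → Z) (K : ℕ) : Z :=
  (Tsum t K)⁻¹ • ∑ k ∈ Finset.Icc 1 K, t k • w k

/-- Weights `γ_k = 1/∏_{i=1}^k (1 - t_i σ_i μ)` (so `γ_0 = 1`). -/
def gammaW (t σ : ℕ → ℝ) (μ : ℝ) (k : ℕ) : ℝ :=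
  (∏ i ∈ Finset.Icc 1 k, (1 - t i * σ i * μ))⁻¹

/-- The weighted ergodic average used in the strongly monotone case. -/
def zbarW (t σ : ℕ → ℝ) (μ : ℝ) (w : ℕ → Z) (K : ℕ) : Z :=
  (∑ i ∈ Finset.Icc 1 K, t i * σ i * gammaW t σ μ i)⁻¹ •
    ∑ i ∈ Finset.Icc 1 K, (t i * σ i * gammaW t σ μ i) • w i

/-- Convex tangent cone `T_C(x) = cl(⋃_{λ>0} (C - x)/λ)`. -/
def tangentConeCvx (C : Set Z) (x : Z) : Set Z :=
  closure {v : Z | ∃ lam : ℝ, 0 < lam ∧ ∃ c ∈ C, v = lam⁻¹ • (c - x)}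

/-- Polar cone of a set. -/
def polarCone (K : Set Z) : Set Z := {z : Z | ∀ x ∈ K, ⟪z, x⟫ ≤ 0}


set_option maxHeartbeats 1000000 in
lemma aux_prox_real {τ : ℝ} {G : Z → EReal} {u x v : Z} {rv rx : ℝ}
    (h : IsProx τ G u x) (hv : G v = (rv : EReal)) (hx : G x = (rx : EReal)) :
    ⟪u - x, v - x⟫ ≤ τ * (rv - rx) := by
  have H := h v
  rw [hv, hx, ← EReal.coe_sub, ← EReal.coe_mul] at H
  exact_mod_cast H

lemma aux_prox_fin {τ : ℝ} (hτ : 0 < τ) {G : Z → EReal} (hbot : ∀ v, G v ≠ ⊥)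
    {v₀ : Z} {r₀ : ℝ} (h₀ : G v₀ = (r₀ : EReal)) {u x : Z} (hx : IsProx τ G u x) :
    ∃ r : ℝ, G x = (r : EReal) := by
  have hnt : G x ≠ ⊤ := by
    intro ht
    have H := hx v₀
    rw [h₀, ht, EReal.sub_top, EReal.mul_bot_of_pos (by exact_mod_cast hτ)] at H
    exact EReal.coe_ne_bot _ (le_bot_iff.1 H)
  exact ⟨(G x).toReal, (EReal.coe_toReal hnt (hbot x)).symm⟩

lemma aux_Gfun_ne_bot {g₁ g₂ : Z → EReal} (hg₁ : ProperConvexLsc g₁)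
    (hg₂ : ProperConvexLsc g₂) {σ : ℕ → ℝ} (hσ : ∀ k, 0 < σ k) (k : ℕ) (v : Z) :
    Gfun g₁ g₂ σ k v ≠ ⊥ := by
  unfold Gfun
  intro hcon
  rw [EReal.add_eq_bot_iff] at hcon
  rcases hcon with hcon | hcon
  · exact hg₂.ne_bot v hcon
  · by_cases h : g₁ v = ⊤
    · rw [h, EReal.coe_mul_top_of_pos (hσ k)] at hcon
      simp at hcon
    · rw [← EReal.coe_toReal h (hg₁.ne_bot v), ← EReal.coe_mul] at hcon
      exact EReal.coe_ne_bot _ hcon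

lemma aux_Vop_lip {F₁ F₂ : Z → Z} {LF₁ LF₂ : ℝ}
    (hF₁L : IsLipOp LF₁ F₁) (hF₂L : IsLipOp LF₂ F₂) {σ : ℕ → ℝ} (hσ : ∀ k, 0 < σ k)
    (k : ℕ) (x y : Z) :
    ‖Vop F₁ F₂ σ k x - Vop F₁ F₂ σ k y‖ ≤ (LF₂ + σ k * LF₁) * ‖x - y‖ := by
  have e : Vop F₁ F₂ σ k x - Vop F₁ F₂ σ k y
      = (F₂ x - F₂ y) + σ k • (F₁ x - F₁ y) := by
    simp only [Vop, smul_sub]; abel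
  rw [e]
  have h1 : ‖(F₂ x - F₂ y) + σ k • (F₁ x - F₁ y)‖
      ≤ ‖F₂ x - F₂ y‖ + ‖σ k • (F₁ x - F₁ y)‖ := norm_add_le _ _
  have h2 : ‖σ k • (F₁ x - F₁ y)‖ = σ k * ‖F₁ x - F₁ y‖ := by
    rw [norm_smul, Real.norm_eq_abs, abs_of_pos (hσ k)]
  have h3 := hF₂L x y
  have h4 := mul_le_mul_of_nonneg_left (hF₁L x y) (hσ k).le
  nlinarith [h1, h2, h3, h4]

set_option maxHeartbeats 1600000 in
/-- per-iteration estimate (Lemma `lem:estimates`(ii)) under the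
step-size condition `8 t_k² L_k² ≤ 1`, for `k ≥ 2`. -/
theorem optimistic_extragradient_refined_estimate
    (F₁ F₂ : Z → Z) (LF₁ LF₂ : ℝ) (g₁ g₂ : Z → EReal)
    (hF₁m : IsMonotoneOp F₁) (hF₂m : IsMonotoneOp F₂)
    (hF₁L : IsLipOp LF₁ F₁) (hF₂L : IsLipOp LF₂ F₂)
    (hg₁ : ProperConvexLsc g₁) (hg₂ : ProperConvexLsc g₂)
    (hdom : (edom g₁ ∩ edom g₂).Nonempty)
    (σ t : ℕ → ℝ) (hσpos : ∀ k, 0 < σ k) (hσdec : Antitone σ) (htpos : ∀ k, 0 < t k)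
    (hstep : ∀ k ≥ 1, 8 * t k ^ 2 * (LF₂ + σ k * LF₁) ^ 2 ≤ 1)
    (z w : ℕ → Z) (hinit : w 0 = z 1)
    (hw : ∀ k ≥ 1, IsProx (t k) (Gfun g₁ g₂ σ k)
      (z k - t k • Vop F₁ F₂ σ k (w (k - 1))) (w k))
    (hz : ∀ k ≥ 1, IsProx (t k) (Gfun g₁ g₂ σ k)
      (z k - t k • Vop F₁ F₂ σ k (w k)) (z (k + 1))) :
    ∀ zz : Z, ∀ k ≥ 2,
      ((1 / 2 * ‖z (k + 1) - zz‖ ^ 2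
        + t k ^ 2 / 2 * ‖Vop F₁ F₂ σ k (w (k - 1)) - Vop F₁ F₂ σ k (w k)‖ ^ 2 : ℝ) : EReal) ≤
      ((1 / 2 * ‖z k - zz‖ ^ 2
        + t (k - 1) ^ 2 / 2 *
          ‖Vop F₁ F₂ σ (k - 1) (w (k - 2)) - Vop F₁ F₂ σ (k - 1) (w (k - 1))‖ ^ 2 : ℝ) : EReal)
      - (t k : EReal) * (((⟪Vop F₁ F₂ σ k (w k), w k - zz⟫ : ℝ) : EReal)
          + Gfun g₁ g₂ σ k (w k) - Gfun g₁ g₂ σ k zz)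
      - ((1 / 4 * ‖w k - z k‖ ^ 2 : ℝ) : EReal) := by
  intro zz k hk
  obtain ⟨v₀, hv₀₁, hv₀₂⟩ := hdom
  obtain ⟨r₁, hr₁⟩ : ∃ r : ℝ, g₁ v₀ = (r : EReal) :=
    ⟨(g₁ v₀).toReal, (EReal.coe_toReal hv₀₁.ne (hg₁.ne_bot v₀)).symm⟩
  obtain ⟨r₂, hr₂⟩ : ∃ r : ℝ, g₂ v₀ = (r : EReal) :=
    ⟨(g₂ v₀).toReal, (EReal.coe_toReal hv₀₂.ne (hg₂.ne_bot v₀)).symm⟩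
  have hG0 : ∀ j, Gfun g₁ g₂ σ j v₀ = ((r₂ + σ j * r₁ : ℝ) : EReal) := by
    intro j
    unfold Gfun
    rw [hr₁, hr₂, ← EReal.coe_mul, ← EReal.coe_add]
  have hGbot : ∀ j v, Gfun g₁ g₂ σ j v ≠ ⊥ := aux_Gfun_ne_bot hg₁ hg₂ hσpos
  have hk1 : (1 : ℕ) ≤ k := by omega
  have hk1' : (1 : ℕ) ≤ k - 1 := by omega
  have ekm : k - 1 + 1 = k := by omega
  have ekm2 : k - 1 - 1 = k - 2 := by omega
  have Hw := hw k hk1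
  have Hz := hz k hk1
  have Hw' := hw (k - 1) hk1'
  have Hz' := hz (k - 1) hk1'
  rw [ekm2] at Hw'
  rw [ekm] at Hz'
  -- abbreviations
  set a := z k with ha
  set b := w k with hb
  set c := z (k + 1) with hc
  set u := w (k - 1) with hu
  set d := z (k - 1) with hd
  set p := Vop F₁ F₂ σ k b with hp
  set q := Vop F₁ F₂ σ k u with hq
  set p₁ := Vop F₁ F₂ σ (k - 1) u with hp₁
  set q₁ := Vop F₁ F₂ σ (k - 1) (w (k - 2)) with hq₁
  set τ := t k with hτdef
  set τ' := t (k - 1) with hτ'def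
  have hτpos : 0 < τ := htpos k
  have hτ'pos : 0 < τ' := htpos (k - 1)
  -- finiteness of Gfun at prox outputs
  obtain ⟨rb, hrb⟩ := aux_prox_fin hτpos (hGbot k) (hG0 k) Hw
  obtain ⟨rc, hrc⟩ := aux_prox_fin hτpos (hGbot k) (hG0 k) Hz
  obtain ⟨ru, hru⟩ := aux_prox_fin hτ'pos (hGbot (k - 1)) (hG0 (k - 1)) Hw'
  obtain ⟨ra, hra⟩ := aux_prox_fin hτ'pos (hGbot (k - 1)) (hG0 (k - 1)) Hz'
  -- step k-1: contraction estimate ‖u - a‖ ≤ τ' ‖q₁ - p₁‖ (squared)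
  have h3 := aux_prox_real Hw' hra hru
  have h4 := aux_prox_real Hz' hru hra
  have e3 : (d - τ' • q₁) - u = (d - u) - τ' • q₁ := by abel
  have e4 : (d - τ' • p₁) - a = (d - a) - τ' • p₁ := by abel
  rw [e3, inner_sub_left, real_inner_smul_left] at h3
  rw [e4, inner_sub_left, real_inner_smul_left] at h4
  have eq1 : ⟪d - u, a - u⟫ - ⟪d - a, a - u⟫ = ‖a - u‖ ^ 2 := by
    rw [← inner_sub_left, show (d - u) - (d - a) = a - u by abel,
      real_inner_self_eq_norm_sq]
  have eq2 : ⟪d - a, u - a⟫ = -⟪d - a, a - u⟫ := by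
    rw [show u - a = -(a - u) by abel, inner_neg_right]
  have eq3 : ⟪p₁, u - a⟫ = -⟪p₁, a - u⟫ := by
    rw [show u - a = -(a - u) by abel, inner_neg_right]
  have key3 : ‖a - u‖ ^ 2 ≤ τ' * ⟪q₁, a - u⟫ - τ' * ⟪p₁, a - u⟫ := by
    rw [eq2, eq3] at h4
    linarith [h3, h4, eq1]
  have cs3 : ⟪q₁ - p₁, a - u⟫ ≤ ‖q₁ - p₁‖ * ‖a - u‖ := real_inner_le_norm _ _
  have cs3' : τ' * ⟪q₁ - p₁, a - u⟫ ≤ τ' * (‖q₁ - p₁‖ * ‖a - u‖) :=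
    mul_le_mul_of_nonneg_left cs3 hτ'pos.le
  rw [inner_sub_left] at cs3'
  have hUA2 : ‖u - a‖ ^ 2 ≤ τ' ^ 2 * ‖q₁ - p₁‖ ^ 2 := by
    rw [norm_sub_rev u a]
    nlinarith [key3, cs3', sq_nonneg (‖a - u‖ - τ' * ‖q₁ - p₁‖), mul_comm τ' ⟪q₁, a - u⟫]
  -- step k: two prox inequalities
  by_cases hzztop : Gfun g₁ g₂ σ k zz = ⊤
  · -- RHS is ⊤
    rw [hzztop, hrb, show ((⟪p, b - zz⟫ : ℝ) : EReal) + (rb : EReal) - ⊤ = ⊥ from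
        EReal.sub_top _,
      EReal.mul_bot_of_pos (by exact_mod_cast hτpos)]
    rw [show ((1 / 2 * ‖a - zz‖ ^ 2 + τ' ^ 2 / 2 * ‖q₁ - p₁‖ ^ 2 : ℝ) : EReal) - ⊥
        - ((1 / 4 * ‖b - a‖ ^ 2 : ℝ) : EReal) = ⊤ from ?_]
    · exact le_top
    · rw [show ((1 / 2 * ‖a - zz‖ ^ 2 + τ' ^ 2 / 2 * ‖q₁ - p₁‖ ^ 2 : ℝ) : EReal) - ⊥ = ⊤ by
        rw [sub_eq_add_neg, EReal.neg_bot, EReal.add_top_of_ne_bot (EReal.coe_ne_bot _)]]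
      exact EReal.top_sub_coe _
  · obtain ⟨rzz, hrzz⟩ : ∃ r : ℝ, Gfun g₁ g₂ σ k zz = (r : EReal) :=
      ⟨_, (EReal.coe_toReal hzztop (hGbot k zz)).symm⟩
    have h1 := aux_prox_real Hz hrzz hrc
    have h2 := aux_prox_real Hw hrc hrb
    have e1 : (a - τ • p) - c = (a - c) - τ • p := by abel
    have e2 : (a - τ • q) - b = (a - b) - τ • q := by abel
    rw [e1, inner_sub_left, real_inner_smul_left] at h1
    rw [e2, inner_sub_left, real_inner_smul_left] at h2
    -- norm identities
    have E1 : 2 * ⟪a - c, zz - c⟫ = ‖a - c‖ ^ 2 + ‖c - zz‖ ^ 2 - ‖a - zz‖ ^ 2 := by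
      have hnn := norm_sub_sq_real (a - c) (zz - c)
      rw [show (a - c) - (zz - c) = a - zz by abel, norm_sub_rev zz c] at hnn
      linarith
    have E2 : 2 * ⟪a - b, c - b⟫ = ‖a - b‖ ^ 2 + ‖c - b‖ ^ 2 - ‖a - c‖ ^ 2 := by
      have hnn := norm_sub_sq_real (a - b) (c - b)
      rw [show (a - b) - (c - b) = a - c by abel] at hnn
      linarith
    have E3 : τ * ⟪p, zz - c⟫ = -(τ * ⟪p, b - zz⟫) - τ * ⟪p, c - b⟫ := by
      rw [show zz - c = -(b - zz) + -(c - b) by abel, inner_add_right,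
        inner_neg_right, inner_neg_right]
      ring
    have E4 : τ * ⟪q, c - b⟫ = τ * ⟪q - p, c - b⟫ + τ * ⟪p, c - b⟫ := by
      rw [inner_sub_left]; ring
    -- Cauchy-Schwarz / Young bound
    have CS : ⟪q - p, c - b⟫ ≤ ‖q - p‖ * ‖c - b‖ := real_inner_le_norm _ _
    have B1 : τ * ⟪q - p, c - b⟫ ≤ 1 / 2 * ‖c - b‖ ^ 2 + τ ^ 2 / 2 * ‖q - p‖ ^ 2 := by
      nlinarith [sq_nonneg (τ * ‖q - p‖ - ‖c - b‖), mul_le_mul_of_nonneg_left CS hτpos.le]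
    -- Lipschitz chain bound
    have B2 : τ ^ 2 * ‖q - p‖ ^ 2 ≤ 1 / 4 * ‖a - b‖ ^ 2 + τ' ^ 2 / 2 * ‖q₁ - p₁‖ ^ 2 := by
      set L' := max (LF₂ + σ k * LF₁) 0 with hL'def
      have hL'nn : 0 ≤ L' := le_max_right _ _
      have lip0 : ‖q - p‖ ≤ L' * ‖u - b‖ :=
        le_trans (aux_Vop_lip hF₁L hF₂L hσpos k u b)
          (mul_le_mul_of_nonneg_right (le_max_left _ _) (norm_nonneg _))
      have tri : ‖u - b‖ ≤ ‖u - a‖ + ‖a - b‖ := by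
        have := dist_triangle u a b
        simpa [dist_eq_norm] using this
      have lip1 : ‖q - p‖ ≤ L' * (‖u - a‖ + ‖a - b‖) :=
        le_trans lip0 (mul_le_mul_of_nonneg_left tri hL'nn)
      have sq1 : ‖q - p‖ ^ 2 ≤ (L' * (‖u - a‖ + ‖a - b‖)) ^ 2 :=
        pow_le_pow_left₀ (norm_nonneg _) lip1 2
      have hL'sq : L' ^ 2 ≤ (LF₂ + σ k * LF₁) ^ 2 := by
        rcases le_total (LF₂ + σ k * LF₁) 0 with h | h
        · rw [hL'def, max_eq_right h]
          simpa using sq_nonneg (LF₂ + σ k * LF₁)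
        · rw [hL'def, max_eq_left h]
      have hstep' : 8 * τ ^ 2 * L' ^ 2 ≤ 1 := by
        have h8 := hstep k hk1
        nlinarith [mul_le_mul_of_nonneg_left hL'sq
          (by positivity : (0 : ℝ) ≤ 8 * τ ^ 2)]
      have m1 : τ ^ 2 * ‖q - p‖ ^ 2 ≤ τ ^ 2 * (L' * (‖u - a‖ + ‖a - b‖)) ^ 2 :=
        mul_le_mul_of_nonneg_left sq1 (sq_nonneg τ)
      have m2 : 8 * τ ^ 2 * L' ^ 2 * (‖u - a‖ + ‖a - b‖) ^ 2
          ≤ 1 * (‖u - a‖ + ‖a - b‖) ^ 2 :=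
        mul_le_mul_of_nonneg_right hstep' (sq_nonneg _)
      have m3 : (‖u - a‖ + ‖a - b‖) ^ 2 ≤ 2 * ‖u - a‖ ^ 2 + 2 * ‖a - b‖ ^ 2 := by
        nlinarith [sq_nonneg (‖u - a‖ - ‖a - b‖)]
      linarith only [m1, m2, m3, hUA2, sq_nonneg (τ' * ‖q₁ - p₁‖)]
    have eAB2 : ‖a - b‖ ^ 2 = ‖b - a‖ ^ 2 := by rw [norm_sub_rev]
    have MAIN : 1 / 2 * ‖c - zz‖ ^ 2 + τ ^ 2 / 2 * ‖q - p‖ ^ 2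
        ≤ 1 / 2 * ‖a - zz‖ ^ 2 + τ' ^ 2 / 2 * ‖q₁ - p₁‖ ^ 2
          - τ * (⟪p, b - zz⟫ + rb - rzz) - 1 / 4 * ‖b - a‖ ^ 2 := by
      linarith only [h1, h2, E1, E2, E3, E4, B1, B2, eAB2]
    rw [hrb, hrzz]
    have ecast : (τ : EReal) * (((⟪p, b - zz⟫ : ℝ) : EReal) + (rb : EReal) - (rzz : EReal))
        = ((τ * (⟪p, b - zz⟫ + rb - rzz) : ℝ) : EReal) := by
      rw [← EReal.coe_add, ← EReal.coe_sub, ← EReal.coe_mul]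
    rw [ecast, ← EReal.coe_sub, ← EReal.coe_sub, EReal.coe_le_coe_iff]
    linarith [MAIN]

end
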